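/- Under the setup where d is strict negative type on [N], J = peel(d), I = J \ {j₀}, with δ the distance column from I to j₀, Δ = d|_I^{-1} δ, w⁽⁰⁾ = d|_J^{-1} 1, and w₍J₎⁽⁰⁾ the coordinate of w⁽⁰⁾ at j₀: then peel(d|_I) = I if and only if w⁽⁰⁾|_I + w⁽⁰⁾_{j₀}·Δ > 0 componentwise. -/

import Mathlib

open Matrix BigOperators

section AuxStmt12

variable {ι : Type*} [Fintype ι] [DecidableEq ι]

lemma aux_dot_symm (e : Matrix ι ι ℝ) (he : e.IsSymm) (x y : ι → ℝ) :
    x ⬝ᵥ e.mulVec y = y ⬝ᵥ e.mulVec x := by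
  rw [dotProduct_mulVec, ← mulVec_transpose, he.eq, dotProduct_comm]

lemma aux_expand (e : Matrix ι ι ℝ) (he : e.IsSymm) (q v : ι → ℝ) :
    (q + v) ⬝ᵥ e.mulVec (q + v)
      = q ⬝ᵥ e.mulVec q + 2 * (v ⬝ᵥ e.mulVec q) + v ⬝ᵥ e.mulVec v := by
  rw [mulVec_add, dotProduct_add, add_dotProduct, add_dotProduct, aux_dot_symm e he q v]
  ring

lemma aux_mid_mem (a b : ι) (hab : a ≠ b) :
    (1/2 : ℝ) • (Pi.single a 1 + Pi.single b 1) ∈ stdSimplex ℝ ι := by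
  constructor
  · intro i
    simp only [Pi.smul_apply, Pi.add_apply, smul_eq_mul]
    have h1 : (0:ℝ) ≤ (Pi.single a (1:ℝ) : ι → ℝ) i := by
      rcases eq_or_ne i a with h | h
      · subst h; simp
      · simp [Pi.single_eq_of_ne h]
    have h2 : (0:ℝ) ≤ (Pi.single b (1:ℝ) : ι → ℝ) i := by
      rcases eq_or_ne i b with h | h
      · subst h; simp
      · simp [Pi.single_eq_of_ne h]
    linarith
  · simp only [Pi.smul_apply, Pi.add_apply, smul_eq_mul, ← Finset.mul_sum,
      Finset.sum_add_distrib, Finset.sum_pi_single, Finset.mem_univ, if_pos]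
    norm_num

lemma aux_mid_quad (e : Matrix ι ι ℝ) (he : e.IsSymm) (hdiag : ∀ i, e i i = 0) (a b : ι) :
    ((1/2 : ℝ) • (Pi.single a 1 + Pi.single b 1)) ⬝ᵥ
      e.mulVec ((1/2 : ℝ) • (Pi.single a 1 + Pi.single b 1)) = e a b / 2 := by
  have hba : e b a = e a b := he.apply b a ▸ rfl
  rw [smul_dotProduct, mulVec_smul, dotProduct_smul]
  rw [mulVec_add, dotProduct_add, add_dotProduct, add_dotProduct]
  simp only [mulVec_single, MulOpposite.op_one, one_smul, mul_one]
  rw [single_dotProduct, single_dotProduct, single_dotProduct, single_dotProduct]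
  simp only [one_mul, Matrix.col_apply, hdiag]
  have : e b a = e a b := by
    have := congrFun (congrFun he.eq a) b
    simpa [Matrix.transpose_apply] using this
  rw [this]
  simp only [smul_eq_mul]; ring

lemma aux_det (e : Matrix ι ι ℝ) (he : e.IsSymm) (hdiag : ∀ i, e i i = 0)
    (hSNT : ∀ x : ι → ℝ, x ≠ 0 → ∑ i, x i = 0 → x ⬝ᵥ e.mulVec x < 0)
    (a b : ι) (hab : a ≠ b) (hpos : 0 < e a b) : IsUnit e.det := by
  rw [isUnit_iff_ne_zero]
  intro hdet
  obtain ⟨v, hv0, hvz⟩ := (Matrix.exists_mulVec_eq_zero_iff).mpr hdet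
  set u : ι → ℝ := (1/2 : ℝ) • (Pi.single a 1 + Pi.single b 1) with hu
  have hsumu : ∑ i, u i = 1 := (aux_mid_mem a b hab).2
  have huq : u ⬝ᵥ e.mulVec u = e a b / 2 := aux_mid_quad e he hdiag a b
  have h2 : (e.mulVec u) a = e a b / 2 := by
    rw [hu, mulVec_smul, mulVec_add]
    simp only [mulVec_single, MulOpposite.op_one, one_smul, Matrix.col_apply, mul_one, Pi.smul_apply, Pi.add_apply, smul_eq_mul]
    rw [hdiag a]; ring
  clear_value u
  set c := ∑ i, v i with hc
  rcases eq_or_ne c 0 with h0 | h0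
  · have := hSNT v hv0 h0
    rw [hvz] at this
    simp at this
  · set y : ι → ℝ := v - c • u with hy
    have hsumy : ∑ i, y i = 0 := by
      simp [hy, Finset.sum_sub_distrib, ← Finset.mul_sum, hsumu, hc]
    have hyne : y ≠ 0 := by
      intro h
      have hveq : v = c • u := sub_eq_zero.mp h
      have hh : e.mulVec v = c • e.mulVec u := by rw [hveq, mulVec_smul]
      rw [hvz] at hh
      have h3 := congrFun hh a
      rw [Pi.zero_apply, Pi.smul_apply, h2, smul_eq_mul] at h3
      rcases mul_eq_zero.mp h3.symm with h | h
      · exact h0 h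
      · linarith
    have hneg := hSNT y hyne hsumy
    have hque : u ⬝ᵥ e.mulVec v = 0 := by rw [hvz]; simp
    have hvque : v ⬝ᵥ e.mulVec u = 0 := by rw [aux_dot_symm e he v u, hque]
    have hyq : y ⬝ᵥ e.mulVec y = c^2 * (e a b / 2) := by
      have expand : y ⬝ᵥ e.mulVec y
          = v ⬝ᵥ e.mulVec v - c * (v ⬝ᵥ e.mulVec u) - c * (u ⬝ᵥ e.mulVec v)
            + c * c * (u ⬝ᵥ e.mulVec u) := by
        rw [hy]
        rw [sub_dotProduct, mulVec_sub, dotProduct_sub, dotProduct_sub]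
        rw [mulVec_smul, dotProduct_smul, smul_dotProduct, smul_dotProduct, dotProduct_smul]
        simp only [smul_eq_mul]
        ring
      rw [expand, hque, hvque, huq, hvz]
      simp only [dotProduct_zero]
      ring
    rw [hyq] at hneg
    nlinarith [sq_nonneg c, pow_pos (abs_pos.mpr h0) 2]

lemma aux_grad_zero (e : Matrix ι ι ℝ) (he : e.IsSymm)
    (hSNT : ∀ x : ι → ℝ, x ≠ 0 → ∑ i, x i = 0 → x ⬝ᵥ e.mulVec x < 0)
    (q : ι → ℝ) (hq : q ∈ stdSimplex ℝ ι)
    (hqmax : ∀ r ∈ stdSimplex ℝ ι, r ⬝ᵥ e.mulVec r ≤ q ⬝ᵥ e.mulVec q)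
    (hsupp : ∀ i, q i ≠ 0)
    (v : ι → ℝ) (hv : ∑ i, v i = 0) : v ⬝ᵥ e.mulVec q = 0 := by
  -- first show ≤ 0 for all sum-zero v, then apply to -v
  suffices key : ∀ w : ι → ℝ, ∑ i, w i = 0 → w ⬝ᵥ e.mulVec q ≤ 0 by
    have h1 := key v hv
    have h2 := key (-v) (by simpa using hv)
    rw [neg_dotProduct] at h2
    linarith
  intro w hw
  by_contra hcon
  push_neg at hcon
  -- a := w ⬝ᵥ e.mulVec q > 0 ; w ≠ 0
  set A := w ⬝ᵥ e.mulVec q with hA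
  have hwne : w ≠ 0 := by
    intro h
    rw [h] at hA
    simp at hA
    rw [hA] at hcon
    exact lt_irrefl 0 hcon
  obtain ⟨i₀, hi₀⟩ := Function.ne_iff.mp hwne
  haveI : Nonempty ι := ⟨i₀⟩
  have hB : w ⬝ᵥ e.mulVec w < 0 := hSNT w hwne hw
  set B := w ⬝ᵥ e.mulVec w with hBdef
  -- positivity margin
  set m := Finset.univ.inf' Finset.univ_nonempty q with hm
  have hmpos : 0 < m := by
    rw [hm]
    apply (Finset.lt_inf'_iff _).mpr
    intro i _
    exact lt_of_le_of_ne (hq.1 i) (Ne.symm (hsupp i))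
  set M := Finset.univ.sup' Finset.univ_nonempty (fun i => |w i|) with hM
  have hMpos : 0 < M := by
    rw [hM]
    apply lt_of_lt_of_le (abs_pos.mpr (by simpa using hi₀))
    exact Finset.le_sup' (fun i => |w i|) (Finset.mem_univ i₀)
  set ε₀ := m / M with hε₀
  have hε₀pos : 0 < ε₀ := div_pos hmpos hMpos
  -- feasibility: for 0 < t ≤ ε₀, q + t • w ∈ simplex
  have hfeas : ∀ t : ℝ, 0 < t → t ≤ ε₀ → q + t • w ∈ stdSimplex ℝ ι := by
    intro t ht htle
    constructor
    · intro i
      have h1 : m ≤ q i := Finset.inf'_le _ (Finset.mem_univ i)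
      have h2 : |w i| ≤ M := Finset.le_sup' (fun i => |w i|) (Finset.mem_univ i)
      have h3 : |t * w i| ≤ ε₀ * M := by
        rw [abs_mul, abs_of_pos ht]
        exact mul_le_mul htle h2 (abs_nonneg _) (le_of_lt hε₀pos)
      have h4 : ε₀ * M = m := by
        rw [hε₀]; field_simp
      have := neg_abs_le (t * w i)
      simp only [Pi.add_apply, Pi.smul_apply, smul_eq_mul]
      linarith
    · simp [Finset.sum_add_distrib, hq.2, ← Finset.mul_sum, hw]
  -- quadratic inequality
  have hquad : ∀ t : ℝ, 0 < t → t ≤ ε₀ → 2 * t * A + t^2 * B ≤ 0 := by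
    intro t ht htle
    have := hqmax (q + t • w) (hfeas t ht htle)
    rw [aux_expand e he q (t • w)] at this
    simp only [mulVec_smul, dotProduct_smul, smul_dotProduct, smul_eq_mul] at this
    nlinarith [this]
  -- choose t
  set t := min ε₀ (A / (-B)) with ht
  have hABpos : 0 < A / (-B) := div_pos hcon (by linarith)
  have htpos : 0 < t := lt_min hε₀pos hABpos
  have htle : t ≤ ε₀ := min_le_left _ _
  have h := hquad t htpos htle
  have h5 : t * (-B) ≤ A := by
    have : t ≤ A / (-B) := min_le_right _ _
    calc t * (-B) ≤ (A / (-B)) * (-B) := by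
          apply mul_le_mul_of_nonneg_right this (by linarith)
      _ = A := div_mul_cancel₀ A (by linarith : (-B) ≠ 0)
  nlinarith [htpos, hcon]

lemma aux_kkt (e : Matrix ι ι ℝ) (he : e.IsSymm)
    (hSNT : ∀ x : ι → ℝ, x ≠ 0 → ∑ i, x i = 0 → x ⬝ᵥ e.mulVec x < 0)
    (q : ι → ℝ) (hq : q ∈ stdSimplex ℝ ι)
    (hqmax : ∀ r ∈ stdSimplex ℝ ι, r ⬝ᵥ e.mulVec r ≤ q ⬝ᵥ e.mulVec q)
    (hsupp : ∀ i, q i ≠ 0) (i : ι) :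
    (e.mulVec q) i = q ⬝ᵥ e.mulVec q := by
  have hconst : ∀ j : ι, (e.mulVec q) j = (e.mulVec q) i := by
    intro j
    have hv : ∑ k, ((Pi.single j 1 - Pi.single i 1 : ι → ℝ)) k = 0 := by
      simp [Finset.sum_sub_distrib, Finset.sum_pi_single]
    have := aux_grad_zero e he hSNT q hq hqmax hsupp _ hv
    rw [sub_dotProduct, single_dotProduct, single_dotProduct] at this
    simp only [one_mul] at this
    linarith
  have hh : q ⬝ᵥ e.mulVec q = (e.mulVec q) i := by
    calc q ⬝ᵥ e.mulVec q = ∑ k, q k * (e.mulVec q) k := rfl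
      _ = ∑ k, q k * (e.mulVec q) i := by
          apply Finset.sum_congr rfl; intro k _; rw [hconst k]
      _ = (∑ k, q k) * (e.mulVec q) i := by rw [Finset.sum_mul]
      _ = (e.mulVec q) i := by rw [hq.2, one_mul]
  rw [hh]

lemma aux_cont (e : Matrix ι ι ℝ) : Continuous (fun x : ι → ℝ => x ⬝ᵥ e.mulVec x) := by
  simp only [dotProduct, mulVec]
  continuity

lemma aux_main (e : Matrix ι ι ℝ) (he : e.IsSymm) (hdiag : ∀ i, e i i = 0)
    (hSNT : ∀ x : ι → ℝ, x ≠ 0 → ∑ i, x i = 0 → x ⬝ᵥ e.mulVec x < 0)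
    (a b : ι) (hab : a ≠ b) (hposab : 0 < e a b) :
    (∀ q ∈ stdSimplex ℝ ι,
        (∀ r ∈ stdSimplex ℝ ι, r ⬝ᵥ e.mulVec r ≤ q ⬝ᵥ e.mulVec q) → ∀ i, q i ≠ 0)
      ↔ ∀ i, 0 < e⁻¹.mulVec 1 i := by
  haveI : Nonempty ι := ⟨a⟩
  have hunit : IsUnit e.det := aux_det e he hdiag hSNT a b hab hposab
  constructor
  · intro hl
    obtain ⟨q, hq, hqmax⟩ := (isCompact_stdSimplex ℝ ι).exists_isMaxOn
      ⟨Pi.single a 1, single_mem_stdSimplex ℝ a⟩ (aux_cont e).continuousOn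
    have hqmax' : ∀ r ∈ stdSimplex ℝ ι, r ⬝ᵥ e.mulVec r ≤ q ⬝ᵥ e.mulVec q :=
      fun r hr => hqmax hr
    have hsupp := hl q hq hqmax'
    have hkkt := aux_kkt e he hSNT q hq hqmax' hsupp
    set c := q ⬝ᵥ e.mulVec q with hc
    have hcpos : 0 < c := by
      have h1 := hqmax' _ (aux_mid_mem a b hab)
      rw [aux_mid_quad e he hdiag a b] at h1
      linarith
    have heq : e.mulVec q = c • (1 : ι → ℝ) := by
      funext i
      rw [Pi.smul_apply, Pi.one_apply, smul_eq_mul, mul_one]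
      exact hkkt i
    have hinv : e⁻¹.mulVec 1 = c⁻¹ • q := by
      have h1 : (1 : ι → ℝ) = c⁻¹ • e.mulVec q := by
        rw [heq, smul_smul, inv_mul_cancel₀ (ne_of_gt hcpos), one_smul]
      rw [h1, mulVec_smul, mulVec_mulVec, Matrix.nonsing_inv_mul e hunit, one_mulVec]
    intro i
    rw [hinv, Pi.smul_apply, smul_eq_mul]
    have : 0 < q i := lt_of_le_of_ne (hq.1 i) (Ne.symm (hsupp i))
    exact mul_pos (inv_pos.mpr hcpos) this
  · intro hr q hq hqmax i
    set u := e⁻¹.mulVec 1 with huu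
    have heu : e.mulVec u = 1 := by
      rw [huu, mulVec_mulVec, Matrix.mul_nonsing_inv e hunit, one_mulVec]
    set s := ∑ k, u k with hs
    have hspos : 0 < s := Finset.sum_pos (fun k _ => hr k) Finset.univ_nonempty
    set qs : ι → ℝ := s⁻¹ • u with hqs
    have hqsmem : qs ∈ stdSimplex ℝ ι := by
      constructor
      · intro k
        rw [hqs, Pi.smul_apply, smul_eq_mul]
        exact le_of_lt (mul_pos (inv_pos.mpr hspos) (hr k))
      · rw [hqs]
        simp only [Pi.smul_apply, smul_eq_mul, ← Finset.mul_sum, ← hs]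
        exact inv_mul_cancel₀ (ne_of_gt hspos)
    have heqs : e.mulVec qs = s⁻¹ • (1 : ι → ℝ) := by
      rw [hqs, mulVec_smul, heu]
    rcases eq_or_ne q qs with heq | hne
    · rw [heq, hqs, Pi.smul_apply, smul_eq_mul]
      exact ne_of_gt (mul_pos (inv_pos.mpr hspos) (hr i))
    · exfalso
      set v : ι → ℝ := q - qs with hv
      have hvne : v ≠ 0 := fun h => hne (sub_eq_zero.mp h)
      have hvsum : ∑ k, v k = 0 := by
        rw [hv]
        simp [Finset.sum_sub_distrib, hq.2, hqsmem.2]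
      have hcross : v ⬝ᵥ e.mulVec qs = 0 := by
        rw [heqs, dotProduct_smul]
        have : v ⬝ᵥ (1 : ι → ℝ) = ∑ k, v k := by simp [dotProduct]
        rw [this, hvsum, smul_zero]
      have hexp : q ⬝ᵥ e.mulVec q
          = qs ⬝ᵥ e.mulVec qs + 2 * (v ⬝ᵥ e.mulVec qs) + v ⬝ᵥ e.mulVec v := by
        have : q = qs + v := by rw [hv]; ring
        rw [this, aux_expand e he qs v]
      have hneg := hSNT v hvne hvsum
      have hle := hqmax qs hqsmem
      rw [hexp, hcross] at hle
      linarith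

section Ext

variable {α : Type*} [Fintype α] [DecidableEq α]

noncomputable def extFun (S : Finset α) (x : {i // i ∈ S} → ℝ) : α → ℝ :=
  fun i => if h : i ∈ S then x ⟨i, h⟩ else 0

lemma extFun_apply_mem (S : Finset α) (x : {i // i ∈ S} → ℝ) (i : α) (h : i ∈ S) :
    extFun S x i = x ⟨i, h⟩ := dif_pos h

lemma extFun_apply_not (S : Finset α) (x : {i // i ∈ S} → ℝ) (i : α) (h : i ∉ S) :
    extFun S x i = 0 := dif_neg h

lemma sum_of_vanishing (S : Finset α) (f : α → ℝ) (hf : ∀ i ∉ S, f i = 0) :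
    ∑ i, f i = ∑ i : {i // i ∈ S}, f i.1 := by
  rw [Finset.sum_coe_sort S f]
  exact (Finset.sum_subset (Finset.subset_univ S) (fun i _ hi => hf i hi)).symm

lemma quad_of_vanishing (e : Matrix α α ℝ) (S : Finset α) (f : α → ℝ)
    (hf : ∀ i ∉ S, f i = 0) :
    f ⬝ᵥ e.mulVec f
      = (fun i : {i // i ∈ S} => f i.1) ⬝ᵥ
          ((e.submatrix Subtype.val Subtype.val).mulVec (fun i : {i // i ∈ S} => f i.1)) := by
  simp only [dotProduct, mulVec, submatrix_apply]
  have inner : ∀ i : α, ∑ j, e i j * f j = ∑ j : {i // i ∈ S}, e i j.1 * f j.1 :=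
    fun i => sum_of_vanishing S (fun j => e i j * f j) (fun j hj => by rw [hf j hj, mul_zero])
  have outer : ∑ i, f i * (∑ j, e i j * f j)
      = ∑ i : {i // i ∈ S}, f i.1 * (∑ j, e i.1 j * f j) :=
    sum_of_vanishing S (fun i => f i * ∑ j, e i j * f j)
      (fun i hi => by rw [hf i hi, zero_mul])
  rw [outer]
  exact Finset.sum_congr rfl (fun i _ => by rw [inner i.1])

lemma extFun_sum (S : Finset α) (x : {i // i ∈ S} → ℝ) :
    ∑ i, extFun S x i = ∑ i, x i := by
  rw [sum_of_vanishing S (extFun S x) (fun i hi => extFun_apply_not S x i hi)]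
  exact Finset.sum_congr rfl (fun i _ => by rw [extFun_apply_mem S x i.1 i.2])

lemma extFun_quad (e : Matrix α α ℝ) (S : Finset α) (x : {i // i ∈ S} → ℝ) :
    extFun S x ⬝ᵥ e.mulVec (extFun S x)
      = x ⬝ᵥ ((e.submatrix Subtype.val Subtype.val).mulVec x) := by
  rw [quad_of_vanishing e S (extFun S x) (fun i hi => extFun_apply_not S x i hi)]
  have : (fun i : {i // i ∈ S} => extFun S x i.1) = x := by
    funext i; rw [extFun_apply_mem S x i.1 i.2]
  rw [this]

lemma extFun_mem_stdSimplex (S : Finset α) (x : {i // i ∈ S} → ℝ)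
    (hx : x ∈ stdSimplex ℝ {i // i ∈ S}) : extFun S x ∈ stdSimplex ℝ α := by
  constructor
  · intro i
    by_cases h : i ∈ S
    · rw [extFun_apply_mem S x i h]; exact hx.1 _
    · rw [extFun_apply_not S x i h]
  · rw [extFun_sum]; exact hx.2

end Ext

lemma aux_sub_symm {α : Type*} [Fintype α] [DecidableEq α] (e : Matrix α α ℝ)
    (he : e.IsSymm) (S : Finset α) :
    (e.submatrix (Subtype.val : {i // i ∈ S} → α) Subtype.val).IsSymm := by
  ext i j
  simp only [Matrix.transpose_apply, submatrix_apply]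
  exact he.apply _ _

lemma aux_SNT_restrict {α : Type*} [Fintype α] [DecidableEq α] (e : Matrix α α ℝ)
    (hSNT : ∀ x : α → ℝ, x ≠ 0 → ∑ i, x i = 0 → x ⬝ᵥ e.mulVec x < 0) (S : Finset α) :
    ∀ x : {i // i ∈ S} → ℝ, x ≠ 0 → ∑ i, x i = 0 →
      x ⬝ᵥ (e.submatrix Subtype.val Subtype.val).mulVec x < 0 := by
  intro x hx hsum
  have hne : extFun S x ≠ 0 := by
    obtain ⟨k, hk⟩ := Function.ne_iff.mp hx
    intro h
    apply hk
    have h2 := congrFun h k.1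
    rw [extFun_apply_mem S x k.1 k.2] at h2
    simpa using h2
  have hs : ∑ i, extFun S x i = 0 := by rw [extFun_sum]; exact hsum
  have := hSNT _ hne hs
  rwa [extFun_quad] at this

/-- forward KKT consequence: a full-support maximizer forces `e⁻¹ 1 > 0`. -/
lemma aux_inv_one_pos {ι : Type*} [Fintype ι] [DecidableEq ι]
    (e : Matrix ι ι ℝ) (he : e.IsSymm) (hdiag : ∀ i, e i i = 0)
    (hSNT : ∀ x : ι → ℝ, x ≠ 0 → ∑ i, x i = 0 → x ⬝ᵥ e.mulVec x < 0)
    (a b : ι) (hab : a ≠ b) (hposab : 0 < e a b)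
    (q : ι → ℝ) (hq : q ∈ stdSimplex ℝ ι)
    (hqmax : ∀ r ∈ stdSimplex ℝ ι, r ⬝ᵥ e.mulVec r ≤ q ⬝ᵥ e.mulVec q)
    (hsupp : ∀ i, q i ≠ 0) :
    ∀ i, 0 < e⁻¹.mulVec 1 i := by
  have hunit : IsUnit e.det := aux_det e he hdiag hSNT a b hab hposab
  have hkkt := aux_kkt e he hSNT q hq hqmax hsupp
  set c := q ⬝ᵥ e.mulVec q with hc
  have hcpos : 0 < c := by
    have h1 := hqmax _ (aux_mid_mem a b hab)
    rw [aux_mid_quad e he hdiag a b] at h1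
    linarith
  have heq : e.mulVec q = c • (1 : ι → ℝ) := by
    funext i
    rw [Pi.smul_apply, Pi.one_apply, smul_eq_mul, mul_one]
    exact hkkt i
  have hinv : e⁻¹.mulVec 1 = c⁻¹ • q := by
    have h1 : (1 : ι → ℝ) = c⁻¹ • e.mulVec q := by
      rw [heq, smul_smul, inv_mul_cancel₀ (ne_of_gt hcpos), one_smul]
    rw [h1, mulVec_smul, mulVec_mulVec, Matrix.nonsing_inv_mul e hunit, one_mulVec]
  intro i
  rw [hinv, Pi.smul_apply, smul_eq_mul]
  have : 0 < q i := lt_of_le_of_ne (hq.1 i) (Ne.symm (hsupp i))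
  exact mul_pos (inv_pos.mpr hcpos) this

end AuxStmt12

set_option maxHeartbeats 1000000 in
/-- With `J = peel(d)`, `I = J \ {j₀}`, `δ` the distances from `I` to `j₀`,
`Δ = d|_I⁻¹ δ`, and `w⁰ = d|_J⁻¹ 1`: `peel(d|_I) = I` if and only if
`w⁰|_I + w⁰_{j₀} Δ > 0` componentwise. -/
theorem stmt12 {N : ℕ} (d : Matrix (Fin N) (Fin N) ℝ)
    (hsymm : d.IsSymm) (hdiag : ∀ i, d i i = 0)
    (hpos : ∀ i j, i ≠ j → 0 < d i j)
    (htri : ∀ i j k, d i k ≤ d i j + d j k)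
    (hSNT : ∀ x : Fin N → ℝ, x ≠ 0 → ∑ i, x i = 0 → x ⬝ᵥ d.mulVec x < 0)
    (p : Fin N → ℝ) (hp : p ∈ stdSimplex ℝ (Fin N))
    (hmax : ∀ q ∈ stdSimplex ℝ (Fin N), q ⬝ᵥ d.mulVec q ≤ p ⬝ᵥ d.mulVec p)
    (J : Finset (Fin N)) (hJ : ∀ i, i ∈ J ↔ p i ≠ 0)
    (j₀ : Fin N) (hj₀ : j₀ ∈ J)
    (I : Finset (Fin N)) (hI : I = J.erase j₀)
    (dJ : Matrix {i // i ∈ J} {i // i ∈ J} ℝ)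
    (hdJ : dJ = d.submatrix Subtype.val Subtype.val)
    (dI : Matrix {i // i ∈ I} {i // i ∈ I} ℝ)
    (hdI : dI = d.submatrix Subtype.val Subtype.val)
    (δ : {i // i ∈ I} → ℝ) (hδ : ∀ i, δ i = d i.1 j₀)
    (Δ : {i // i ∈ I} → ℝ) (hΔ : Δ = dI⁻¹.mulVec δ)
    (w₀ : {i // i ∈ J} → ℝ) (hw₀ : w₀ = dJ⁻¹.mulVec 1) :
    ((∀ q ∈ stdSimplex ℝ {i // i ∈ I},
        (∀ r ∈ stdSimplex ℝ {i // i ∈ I}, r ⬝ᵥ dI.mulVec r ≤ q ⬝ᵥ dI.mulVec q) →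
        ∀ i, q i ≠ 0) ↔
      (∀ i : {x // x ∈ I},
        0 < w₀ ⟨i.1, Finset.mem_of_mem_erase (by exact hI ▸ i.2 : i.1 ∈ J.erase j₀)⟩
            + w₀ ⟨j₀, hj₀⟩ * Δ i)) := by
  have hp0 : ∀ i ∉ J, p i = 0 := by
    intro i hi
    by_contra h
    exact hi ((hJ i).mpr h)
  rcases I.eq_empty_or_nonempty with hIe | hIne
  · haveI : IsEmpty {x // x ∈ I} :=
      ⟨fun i => Finset.notMem_empty i.1 (hIe ▸ i.2)⟩
    exact iff_of_true (fun q _ _ i => isEmptyElim i) (fun i => isEmptyElim i)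
  obtain ⟨i₁, hi₁⟩ := hIne
  have hi₁J : i₁ ∈ J := Finset.mem_of_mem_erase (hI ▸ hi₁)
  have hi₁ne : i₁ ≠ j₀ := Finset.ne_of_mem_erase (hI ▸ hi₁)
  -- dJ properties
  have hdJsymm : dJ.IsSymm := by rw [hdJ]; exact aux_sub_symm d hsymm J
  have hdJdiag : ∀ k : {i // i ∈ J}, dJ k k = 0 := by
    intro k; rw [hdJ]; exact hdiag k.1
  have hdJSNT : ∀ x : {i // i ∈ J} → ℝ, x ≠ 0 → ∑ i, x i = 0 → x ⬝ᵥ dJ.mulVec x < 0 := by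
    rw [hdJ]; exact aux_SNT_restrict d hSNT J
  have habJ : (⟨i₁, hi₁J⟩ : {i // i ∈ J}) ≠ ⟨j₀, hj₀⟩ :=
    fun h => hi₁ne (congrArg Subtype.val h)
  have hposJ : 0 < dJ ⟨i₁, hi₁J⟩ ⟨j₀, hj₀⟩ := by
    rw [hdJ]; exact hpos i₁ j₀ hi₁ne
  have hdJunit : IsUnit dJ.det :=
    aux_det dJ hdJsymm hdJdiag hdJSNT _ _ habJ hposJ
  -- pJ is a full-support maximizer on J
  have hextp : extFun J (fun k : {i // i ∈ J} => p k.1) = p := by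
    funext i
    by_cases h : i ∈ J
    · rw [extFun_apply_mem J _ i h]
    · rw [extFun_apply_not J _ i h, hp0 i h]
  have hQp : p ⬝ᵥ d.mulVec p
      = (fun k : {i // i ∈ J} => p k.1) ⬝ᵥ dJ.mulVec (fun k : {i // i ∈ J} => p k.1) := by
    rw [hdJ, ← extFun_quad d J (fun k : {i // i ∈ J} => p k.1), hextp]
  have hpJmem : (fun k : {i // i ∈ J} => p k.1) ∈ stdSimplex ℝ {i // i ∈ J} := by
    constructor
    · intro k; exact hp.1 k.1
    · have h1 := sum_of_vanishing J p hp0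
      rw [hp.2] at h1
      exact h1.symm
  have hpJmax : ∀ r ∈ stdSimplex ℝ {i // i ∈ J},
      r ⬝ᵥ dJ.mulVec r ≤ (fun k : {i // i ∈ J} => p k.1) ⬝ᵥ
        dJ.mulVec (fun k : {i // i ∈ J} => p k.1) := by
    intro r hr
    have h1 := hmax (extFun J r) (extFun_mem_stdSimplex J r hr)
    rw [extFun_quad d J r, hQp] at h1
    rw [← hdJ] at h1
    exact h1
  have hpJsupp : ∀ k : {i // i ∈ J}, (fun k : {i // i ∈ J} => p k.1) k ≠ 0 :=
    fun k => (hJ k.1).mp k.2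
  have hw₀pos : ∀ k, 0 < w₀ k := by
    rw [hw₀]
    exact aux_inv_one_pos dJ hdJsymm hdJdiag hdJSNT _ _ habJ hposJ
      _ hpJmem hpJmax hpJsupp
  have hcard1 : 1 ≤ I.card := Finset.card_pos.mpr ⟨i₁, hi₁⟩
  rcases eq_or_lt_of_le hcard1 with hc1 | hc2
  · -- I is a singleton
    haveI hsub : Subsingleton {x // x ∈ I} := by
      apply Fintype.card_le_one_iff_subsingleton.mp
      rw [Fintype.card_coe]
      omega
    have hLHS : ∀ q ∈ stdSimplex ℝ {i // i ∈ I},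
        (∀ r ∈ stdSimplex ℝ {i // i ∈ I}, r ⬝ᵥ dI.mulVec r ≤ q ⬝ᵥ dI.mulVec q) →
        ∀ i, q i ≠ 0 := by
      intro q hq _ i
      have hsum : ∑ k, q k = q i :=
        Finset.sum_eq_single_of_mem i (Finset.mem_univ i)
          (fun b _ hb => absurd (Subsingleton.elim b i) hb)
      rw [hq.2] at hsum
      rw [← hsum]
      exact one_ne_zero
    have hdI0 : dI = 0 := by
      ext x y
      have hxy : x.1 = y.1 :=
        Finset.card_le_one.mp (le_of_eq hc1.symm) x.1 x.2 y.1 y.2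
      rw [hdI]
      simp only [submatrix_apply, Matrix.zero_apply]
      rw [hxy]
      exact hdiag y.1
    have hΔ0 : Δ = 0 := by
      haveI : Nonempty {x // x ∈ I} := ⟨⟨i₁, hi₁⟩⟩
      rw [hΔ, hdI0]
      have hz : (0 : Matrix {x // x ∈ I} {x // x ∈ I} ℝ)⁻¹ = 0 := by
        apply Matrix.nonsing_inv_apply_not_isUnit
        rw [Matrix.det_zero]
        exact not_isUnit_zero
      rw [hz, Matrix.zero_mulVec]
    refine iff_of_true hLHS ?_
    intro i
    rw [hΔ0]
    simp only [Pi.zero_apply, mul_zero, add_zero]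
    exact hw₀pos _
  · -- I has at least two elements
    obtain ⟨a, ha, b, hb, hab⟩ := Finset.one_lt_card.mp hc2
    have hdIsymm : dI.IsSymm := by rw [hdI]; exact aux_sub_symm d hsymm I
    have hdIdiag : ∀ k : {i // i ∈ I}, dI k k = 0 := by
      intro k; rw [hdI]; exact hdiag k.1
    have hdISNT : ∀ x : {i // i ∈ I} → ℝ, x ≠ 0 → ∑ i, x i = 0 → x ⬝ᵥ dI.mulVec x < 0 := by
      rw [hdI]; exact aux_SNT_restrict d hSNT I
    have habI : (⟨a, ha⟩ : {i // i ∈ I}) ≠ ⟨b, hb⟩ :=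
      fun h => hab (congrArg Subtype.val h)
    have hposI : 0 < dI ⟨a, ha⟩ ⟨b, hb⟩ := by rw [hdI]; exact hpos a b hab
    have hdIunit : IsUnit dI.det := aux_det dI hdIsymm hdIdiag hdISNT _ _ habI hposI
    have hmain := aux_main dI hdIsymm hdIdiag hdISNT _ _ habI hposI
    rw [hmain]
    have hmemJ : ∀ i : {x // x ∈ I}, i.1 ∈ J :=
      fun i => Finset.mem_of_mem_erase (show i.1 ∈ J.erase j₀ by exact hI ▸ i.2)
    have hdJw : dJ.mulVec w₀ = 1 := by
      rw [hw₀, mulVec_mulVec, Matrix.mul_nonsing_inv dJ hdJunit, one_mulVec]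
    have hdIΔ : dI.mulVec Δ = δ := by
      rw [hΔ, mulVec_mulVec, Matrix.mul_nonsing_inv dI hdIunit, one_mulVec]
    have hkey : dI.mulVec (fun i => w₀ ⟨i.1, hmemJ i⟩ + w₀ ⟨j₀, hj₀⟩ * Δ i) = 1 := by
      funext i
      have hsplit : (dI.mulVec (fun i => w₀ ⟨i.1, hmemJ i⟩ + w₀ ⟨j₀, hj₀⟩ * Δ i)) i
          = (∑ k : {x // x ∈ I}, dI i k * w₀ ⟨k.1, hmemJ k⟩)
            + w₀ ⟨j₀, hj₀⟩ * (dI.mulVec Δ) i := by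
        have hterm : ∀ k : {x // x ∈ I},
            dI i k * (w₀ ⟨k.1, hmemJ k⟩ + w₀ ⟨j₀, hj₀⟩ * Δ k)
              = dI i k * w₀ ⟨k.1, hmemJ k⟩ + w₀ ⟨j₀, hj₀⟩ * (dI i k * Δ k) := by
          intro k; ring
        calc (dI.mulVec (fun i => w₀ ⟨i.1, hmemJ i⟩ + w₀ ⟨j₀, hj₀⟩ * Δ i)) i
            = ∑ k, dI i k * (w₀ ⟨k.1, hmemJ k⟩ + w₀ ⟨j₀, hj₀⟩ * Δ k) := rfl
          _ = ∑ k, (dI i k * w₀ ⟨k.1, hmemJ k⟩ + w₀ ⟨j₀, hj₀⟩ * (dI i k * Δ k)) :=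
              Finset.sum_congr rfl (fun k _ => hterm k)
          _ = (∑ k, dI i k * w₀ ⟨k.1, hmemJ k⟩)
              + w₀ ⟨j₀, hj₀⟩ * ∑ k, dI i k * Δ k := by
              rw [Finset.sum_add_distrib, Finset.mul_sum]
          _ = (∑ k, dI i k * w₀ ⟨k.1, hmemJ k⟩) + w₀ ⟨j₀, hj₀⟩ * (dI.mulVec Δ) i := rfl
      have h2 : (dI.mulVec Δ) i = δ i := by rw [hdIΔ]
      have hfirst : (∑ k : {x // x ∈ I}, dI i k * w₀ ⟨k.1, hmemJ k⟩)
          = ∑ k ∈ I, d i.1 k * extFun J w₀ k := by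
        rw [← Finset.sum_coe_sort I (fun k => d i.1 k * extFun J w₀ k)]
        apply Finset.sum_congr rfl
        intro k _
        simp only [hdI, submatrix_apply, extFun_apply_mem J w₀ k.1 (hmemJ k)]
      have hh : ∑ k ∈ J, d i.1 k * extFun J w₀ k = (dJ.mulVec w₀) ⟨i.1, hmemJ i⟩ := by
        rw [← Finset.sum_coe_sort J (fun k => d i.1 k * extFun J w₀ k)]
        show _ = ∑ k : {x // x ∈ J}, dJ ⟨i.1, hmemJ i⟩ k * w₀ k
        apply Finset.sum_congr rfl
        intro k _
        simp only [hdJ, submatrix_apply, extFun_apply_mem J w₀ k.1 k.2]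
      have hJ1 : ∑ k ∈ J, d i.1 k * extFun J w₀ k = 1 := by
        rw [hh, hdJw]; rfl
      have hIJ : ∑ k ∈ I, d i.1 k * extFun J w₀ k
          = ∑ k ∈ J.erase j₀, d i.1 k * extFun J w₀ k :=
        Finset.sum_congr hI (fun _ _ => rfl)
      have herase := Finset.sum_erase_add J (fun k => d i.1 k * extFun J w₀ k) hj₀
      have hfj : extFun J w₀ j₀ = w₀ ⟨j₀, hj₀⟩ := extFun_apply_mem J w₀ j₀ hj₀
      simp only [hfj, hJ1] at herase
      have hδi : δ i = d i.1 j₀ := hδ i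
      rw [hsplit, hfirst, h2, hδi, hIJ]
      have h1 : (1 : {x // x ∈ I} → ℝ) i = 1 := rfl
      rw [h1]
      linarith [herase]
    have hveq : dI⁻¹.mulVec 1 = fun i => w₀ ⟨i.1, hmemJ i⟩ + w₀ ⟨j₀, hj₀⟩ * Δ i := by
      have hh := congrArg (fun y => dI⁻¹.mulVec y) hkey
      rw [mulVec_mulVec, Matrix.nonsing_inv_mul dI hdIunit, one_mulVec] at hh
      exact hh.symm
    constructor
    · intro h i
      have hh := h i
      rw [hveq] at hh
      exact hh
    · intro h i
      rw [hveq]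
      exact h i
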